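/- For the two-level regular tree T_{n,m} (root with n children, each of which has m leaf children), the Node-Kayles Grundy value satisfies the recursion 𝒢(T_{n,m}) = mex{ XOR of nm copies of 1, XOR of (n−1) copies of 𝒢(T_{m}), 𝒢(T_{n−1,m}) XOR (XOR of (m−1) copies of 1) }, and equals: 1 if m is even; 2 if both n and m are odd; 3 if n is even and m is odd. -/

import Mathlib

/-- The minimum excluded value of a finite set of naturals. -/
noncomputable def mex (s : Finset ℕ) : ℕ := sInf {n : ℕ | n ∉ s}

/-- Node-Kayles Grundy value of the position given by the induced subgraph of `G`
on the finite vertex set `s`: a move picks a vertex `v ∈ s` and removes its closed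
neighborhood, and the Grundy value is the mex of the Grundy values of the options.
(For a disconnected position this agrees with the nim-sum of the components'
Grundy values, by the Sprague–Grundy theory.) -/
noncomputable def nkGrundy {V : Type*} [DecidableEq V] (G : SimpleGraph V) [DecidableRel G.Adj]
    (s : Finset V) : ℕ :=
  mex (s.attach.image fun v =>
    nkGrundy G ((s.erase v.1).filter fun w => ¬ G.Adj v.1 w))
termination_by s.card
decreasing_by
  exact lt_of_le_of_lt (Finset.card_filter_le _ _) (Finset.card_erase_lt_of_mem v.2)

instance {V : Type*} (r : V → V → Prop) [DecidableEq V] [DecidableRel r] :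
    DecidableRel (SimpleGraph.fromRel r).Adj :=
  fun a b => decidable_of_iff _ (SimpleGraph.fromRel_adj r a b).symm

/-- The nim-sum (bitwise XOR) of `k` copies of the value `v`. -/
def nimRepl (k v : ℕ) : ℕ := (List.replicate k v).foldr (· ^^^ ·) 0

/-- The star with center `0` and leaves `1, …, m`: the tree `T_{m}` on the
vertex set `{0, …, m}`. -/
def starGraph (m : ℕ) : SimpleGraph ℕ :=
  SimpleGraph.fromRel (fun a b => a = 0 ∧ 1 ≤ b ∧ b ≤ m)

instance (m : ℕ) : DecidableRel (starGraph m).Adj :=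
  fun a b => decidable_of_iff _ (SimpleGraph.fromRel_adj _ a b).symm

/-- The two-level regular tree `T_{n,m}`: root `0`, level-1 children `1, …, n`,
and the `m` leaf children of child `a` being `n+(a-1)m+1, …, n+a·m`.  Its vertex
set is `{0, …, n + n·m}`. -/
def tree2 (n m : ℕ) : SimpleGraph ℕ :=
  SimpleGraph.fromRel (fun a b =>
    (a = 0 ∧ 1 ≤ b ∧ b ≤ n) ∨
    (1 ≤ a ∧ a ≤ n ∧ n + (a - 1) * m + 1 ≤ b ∧ b ≤ n + a * m))

instance (n m : ℕ) : DecidableRel (tree2 n m).Adj :=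
  fun a b => decidable_of_iff _ (SimpleGraph.fromRel_adj _ a b).symm


section Mex

lemma mex_notMem (s : Finset ℕ) : mex s ∉ s := by
  have h : {n : ℕ | n ∉ s}.Nonempty := by
    obtain ⟨x, hx⟩ := s.exists_notMem
    exact ⟨x, hx⟩
  exact Nat.sInf_mem h

lemma mem_of_lt_mex {s : Finset ℕ} {k : ℕ} (h : k < mex s) : k ∈ s := by
  by_contra hk
  have h2 : mex s ≤ k := Nat.sInf_le (show k ∈ {n : ℕ | n ∉ s} from hk)
  omega

lemma mex_eq {s : Finset ℕ} {n : ℕ} (h1 : n ∉ s) (h2 : ∀ k < n, k ∈ s) : mex s = n := by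
  have hle : mex s ≤ n := Nat.sInf_le h1
  rcases lt_or_eq_of_le hle with h | h
  · exact absurd (h2 _ h) (mex_notMem s)
  · exact h

end Mex

lemma nkGrundy_eq {V : Type*} [DecidableEq V] (G : SimpleGraph V) [DecidableRel G.Adj]
    (s : Finset V) :
    nkGrundy G s = mex (s.image fun v => nkGrundy G ((s.erase v).filter fun w => ¬ G.Adj v w)) := by
  rw [nkGrundy]
  congr 1
  rw [show (fun v : {x // x ∈ s} => nkGrundy G ((s.erase v.1).filter fun w => ¬ G.Adj v.1 w))
      = (fun v => nkGrundy G ((s.erase v).filter fun w => ¬ G.Adj v w)) ∘ Subtype.val from rfl,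
    ← Finset.image_image, Finset.attach_image_val]

noncomputable def nkMove {V : Type*} [DecidableEq V] (G : SimpleGraph V) [DecidableRel G.Adj]
    (s : Finset V) (v : V) : Finset V := (s.erase v).filter fun w => ¬ G.Adj v w

lemma nkGrundy_eq' {V : Type*} [DecidableEq V] (G : SimpleGraph V) [DecidableRel G.Adj]
    (s : Finset V) : nkGrundy G s = mex (s.image fun v => nkGrundy G (nkMove G s v)) :=
  nkGrundy_eq G s

lemma nkMove_subset {V : Type*} [DecidableEq V] (G : SimpleGraph V) [DecidableRel G.Adj]
    (s : Finset V) (v : V) : nkMove G s v ⊆ s :=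
  (Finset.filter_subset _ _).trans (Finset.erase_subset _ _)

lemma nkMove_card_lt {V : Type*} [DecidableEq V] (G : SimpleGraph V) [DecidableRel G.Adj]
    {s : Finset V} {v : V} (hv : v ∈ s) : (nkMove G s v).card < s.card :=
  lt_of_le_of_lt (Finset.card_filter_le _ _) (Finset.card_erase_lt_of_mem hv)

lemma mex_empty : mex (∅ : Finset ℕ) = 0 := mex_eq (by simp) (by omega)

lemma nkGrundy_empty {V : Type*} [DecidableEq V] (G : SimpleGraph V) [DecidableRel G.Adj] :
    nkGrundy G (∅ : Finset V) = 0 := by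
  rw [nkGrundy_eq', Finset.image_empty, mex_empty]

lemma nkGrundy_edgeless {V : Type*} [DecidableEq V] (G : SimpleGraph V) [DecidableRel G.Adj] :
    ∀ (N : ℕ) (s : Finset V), s.card ≤ N → (∀ a ∈ s, ∀ b ∈ s, ¬ G.Adj a b) →
    nkGrundy G s = s.card % 2 := by
  intro N
  induction N with
  | zero =>
    intro s hs _
    have : s = ∅ := Finset.card_eq_zero.mp (Nat.le_zero.mp hs)
    subst this; simp [nkGrundy_empty]
  | succ N ih =>
    intro s hs hedge
    rcases Finset.eq_empty_or_nonempty s with rfl | hne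
    · simp [nkGrundy_empty]
    rw [nkGrundy_eq']
    have hmove : ∀ v ∈ s, nkMove G s v = s.erase v := by
      intro v hv
      exact Finset.filter_true_of_mem (fun w hw => hedge v hv w (Finset.mem_of_mem_erase hw))
    have himg : (s.image fun v => nkGrundy G (nkMove G s v)) = {(s.card - 1) % 2} := by
      rw [Finset.image_congr (g := fun _ => (s.card - 1) % 2), Finset.image_const hne]
      intro v hv
      dsimp only
      rw [hmove v (Finset.mem_coe.mp hv), ih _ (by rw [Finset.card_erase_of_mem (Finset.mem_coe.mp hv)]; omega)
        (fun a ha b hb => hedge a (Finset.mem_of_mem_erase ha) b (Finset.mem_of_mem_erase hb)),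
        Finset.card_erase_of_mem (Finset.mem_coe.mp hv)]
    rw [himg]
    have hc : 1 ≤ s.card := Finset.card_pos.mpr hne
    rcases Nat.mod_two_eq_zero_or_one s.card with h2 | h2
    · have h1 : (s.card - 1) % 2 = 1 := by omega
      rw [h1, h2]; exact mex_eq (by decide) (fun k hk => absurd hk (Nat.not_lt_zero k))
    · have h1 : (s.card - 1) % 2 = 0 := by omega
      rw [h1, h2]
      exact mex_eq (by decide) (by intro k hk; interval_cases k <;> decide)

lemma nkMove_union_left {V : Type*} [DecidableEq V] (G : SimpleGraph V) [DecidableRel G.Adj]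
    {s t : Finset V} {v : V} (hv : v ∈ s)
    (hcross : ∀ a ∈ s, ∀ b ∈ t, ¬ G.Adj a b) (hd : Disjoint s t) :
    nkMove G (s ∪ t) v = nkMove G s v ∪ t := by
  ext w
  simp only [nkMove, Finset.mem_filter, Finset.mem_erase, Finset.mem_union]
  constructor
  · rintro ⟨⟨hne, hw | hw⟩, hadj⟩
    · exact Or.inl ⟨⟨hne, hw⟩, hadj⟩
    · exact Or.inr hw
  · rintro (⟨⟨hne, hw⟩, hadj⟩ | hw)
    · exact ⟨⟨hne, Or.inl hw⟩, hadj⟩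
    · refine ⟨⟨?_, Or.inr hw⟩, hcross v hv w hw⟩
      intro h; subst h
      exact (Finset.disjoint_left.mp hd hv) hw

lemma nkGrundy_union {V : Type*} [DecidableEq V] (G : SimpleGraph V) [DecidableRel G.Adj] :
    ∀ (N : ℕ) (s t : Finset V), (s ∪ t).card ≤ N →
    (∀ a ∈ s, ∀ b ∈ t, ¬ G.Adj a b) → Disjoint s t →
    nkGrundy G (s ∪ t) = nkGrundy G s ^^^ nkGrundy G t := by
  intro N
  induction N with
  | zero =>
    intro s t hN _ _
    have hst : s ∪ t = ∅ := Finset.card_eq_zero.mp (Nat.le_zero.mp hN)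
    have hs : s = ∅ := Finset.union_eq_empty.mp hst |>.1
    have ht : t = ∅ := Finset.union_eq_empty.mp hst |>.2
    subst hs; subst ht; simp [nkGrundy_empty]
  | succ N ih =>
    intro s t hN hcross hd
    have hcross' : ∀ a ∈ t, ∀ b ∈ s, ¬ G.Adj a b :=
      fun a ha b hb h => hcross b hb a ha h.symm
    have hvs : ∀ v ∈ s, nkGrundy G (nkMove G (s ∪ t) v)
        = nkGrundy G (nkMove G s v) ^^^ nkGrundy G t := by
      intro v hv
      rw [nkMove_union_left G hv hcross hd]
      have hc : (nkMove G s v ∪ t).card ≤ N := by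
        have h1 : (nkMove G (s ∪ t) v).card < (s ∪ t).card :=
          nkMove_card_lt G (Finset.mem_union_left t hv)
        rw [nkMove_union_left G hv hcross hd] at h1
        omega
      exact ih _ _ hc (fun a ha b hb => hcross a (nkMove_subset G s v ha) b hb)
        (Finset.disjoint_of_subset_left (nkMove_subset G s v) hd)
    have hvt : ∀ v ∈ t, nkGrundy G (nkMove G (s ∪ t) v)
        = nkGrundy G s ^^^ nkGrundy G (nkMove G t v) := by
      intro v hv
      rw [Finset.union_comm, nkMove_union_left G hv hcross' hd.symm]
      have hc : (nkMove G t v ∪ s).card ≤ N := by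
        have h1 : (nkMove G (t ∪ s) v).card < (t ∪ s).card :=
          nkMove_card_lt G (Finset.mem_union_left s hv)
        rw [nkMove_union_left G hv hcross' hd.symm] at h1
        rw [Finset.union_comm] at hN
        omega
      rw [ih _ _ hc (fun a ha b hb => hcross' a (nkMove_subset G t v ha) b hb)
        (Finset.disjoint_of_subset_left (nkMove_subset G t v) hd.symm), Nat.xor_comm]
    rw [nkGrundy_eq' G (s ∪ t)]
    apply mex_eq
    · intro hmem
      obtain ⟨v, hv, heq⟩ := Finset.mem_image.mp hmem
      rcases Finset.mem_union.mp hv with hv' | hv'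
      · rw [hvs v hv'] at heq
        have : nkGrundy G (nkMove G s v) = nkGrundy G s := Nat.xor_left_injective heq
        have hmem' : nkGrundy G (nkMove G s v) ∈
            s.image fun v => nkGrundy G (nkMove G s v) :=
          Finset.mem_image_of_mem _ hv'
        rw [this] at hmem'
        exact (nkGrundy_eq' G s ▸ mex_notMem _) hmem'
      · rw [hvt v hv'] at heq
        have : nkGrundy G (nkMove G t v) = nkGrundy G t := Nat.xor_right_injective heq
        have hmem' : nkGrundy G (nkMove G t v) ∈
            t.image fun v => nkGrundy G (nkMove G t v) :=
          Finset.mem_image_of_mem _ hv'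
        rw [this] at hmem'
        exact (nkGrundy_eq' G t ▸ mex_notMem _) hmem'
    · intro k hk
      rcases Nat.lt_xor_cases hk with h | h
      · have : k ^^^ nkGrundy G t ∈ s.image fun v => nkGrundy G (nkMove G s v) := by
          apply mem_of_lt_mex
          rw [← nkGrundy_eq' G s]
          exact h
        obtain ⟨v, hv, heq⟩ := Finset.mem_image.mp this
        refine Finset.mem_image.mpr ⟨v, Finset.mem_union_left t hv, ?_⟩
        rw [hvs v hv, heq, xor_cancel_right]
      · have : k ^^^ nkGrundy G s ∈ t.image fun v => nkGrundy G (nkMove G t v) := by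
          apply mem_of_lt_mex
          rw [← nkGrundy_eq' G t]
          exact h
        obtain ⟨v, hv, heq⟩ := Finset.mem_image.mp this
        refine Finset.mem_image.mpr ⟨v, Finset.mem_union_right s hv, ?_⟩
        rw [hvt v hv, heq, Nat.xor_comm, xor_cancel_right]

lemma nkGrundy_star {V : Type*} [DecidableEq V] (G : SimpleGraph V) [DecidableRel G.Adj]
    {s : Finset V} {r : V} (hr : r ∈ s) (hcard : 2 ≤ s.card)
    (hadj1 : ∀ v ∈ s, v ≠ r → G.Adj r v)
    (hadj2 : ∀ v ∈ s, ∀ w ∈ s, v ≠ r → w ≠ r → ¬ G.Adj v w) :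
    nkGrundy G s = if s.card % 2 = 0 then 1 else 2 := by
  have hval : ∀ v ∈ s, nkGrundy G (nkMove G s v)
      = if v = r then 0 else (s.card - 2) % 2 := by
    intro v hv
    by_cases hvr : v = r
    · subst hvr
      rw [if_pos rfl]
      have : nkMove G s v = ∅ := by
        apply Finset.filter_false_of_mem
        intro w hw
        simp only [not_not]
        exact hadj1 w (Finset.mem_of_mem_erase hw) (Finset.ne_of_mem_erase hw)
      rw [this, nkGrundy_empty]
    · rw [if_neg hvr]
      have hmv : nkMove G s v = (s.erase v).erase r := by
        ext w
        simp only [nkMove, Finset.mem_filter, Finset.mem_erase]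
        constructor
        · rintro ⟨⟨hwv, hws⟩, hnadj⟩
          refine ⟨fun h => ?_, hwv, hws⟩
          subst h
          exact hnadj ((hadj1 v hv hvr).symm)
        · rintro ⟨hwr, hwv, hws⟩
          exact ⟨⟨hwv, hws⟩, hadj2 v hv w hws hvr hwr⟩
      rw [hmv, nkGrundy_edgeless G ((s.erase v).erase r).card _ le_rfl ?_]
      · rw [Finset.card_erase_of_mem (Finset.mem_erase.mpr ⟨Ne.symm hvr, hr⟩),
          Finset.card_erase_of_mem hv]
        omega
      · intro a ha b hb
        have ha' := Finset.mem_erase.mp ha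
        have hb' := Finset.mem_erase.mp hb
        exact hadj2 a (Finset.mem_of_mem_erase ha'.2) b (Finset.mem_of_mem_erase hb'.2)
          ha'.1 hb'.1
  obtain ⟨v₀, hv₀, hv₀r⟩ : ∃ b ∈ s, b ≠ r := Finset.exists_mem_ne (by omega) r
  rw [nkGrundy_eq']
  rcases Nat.mod_two_eq_zero_or_one s.card with h2 | h2
  · rw [if_pos h2]
    apply mex_eq
    · intro hmem
      obtain ⟨v, hv, heq⟩ := Finset.mem_image.mp hmem
      rw [hval v hv] at heq
      by_cases hvr : v = r
      · rw [if_pos hvr] at heq; omega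
      · rw [if_neg hvr] at heq; omega
    · intro k hk
      have hk0 : k = 0 := by omega
      subst hk0
      exact Finset.mem_image.mpr ⟨r, hr, by rw [hval r hr, if_pos rfl]⟩
  · rw [if_neg (by omega)]
    apply mex_eq
    · intro hmem
      obtain ⟨v, hv, heq⟩ := Finset.mem_image.mp hmem
      rw [hval v hv] at heq
      by_cases hvr : v = r
      · rw [if_pos hvr] at heq; omega
      · rw [if_neg hvr] at heq; omega
    · intro k hk
      interval_cases k
      · exact Finset.mem_image.mpr ⟨r, hr, by rw [hval r hr, if_pos rfl]⟩
      · refine Finset.mem_image.mpr ⟨v₀, hv₀, ?_⟩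
        rw [hval v₀ hv₀, if_neg hv₀r]
        omega

lemma nimRepl_zero (v : ℕ) : nimRepl 0 v = 0 := rfl

lemma nimRepl_succ (k v : ℕ) : nimRepl (k + 1) v = v ^^^ nimRepl k v := rfl

lemma nimRepl_eq (k v : ℕ) : nimRepl k v = if k % 2 = 1 then v else 0 := by
  induction k with
  | zero => simp [nimRepl_zero]
  | succ k ih =>
    rw [nimRepl_succ, ih]
    rcases Nat.mod_two_eq_zero_or_one k with h | h
    · rw [if_neg (by omega), if_pos (by omega), Nat.xor_zero]
    · rw [if_pos (by omega), if_neg (by omega), Nat.xor_self]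

lemma nkGrundy_starForest {V : Type*} [DecidableEq V] (G : SimpleGraph V) [DecidableRel G.Adj] :
    ∀ (n : ℕ) (s C : Finset V) (p : V → V) (m : ℕ), 1 ≤ m →
    C.card = n → C ⊆ s →
    (∀ l ∈ s, l ∉ C → p l ∈ C) →
    (∀ a ∈ s, ∀ b ∈ s, G.Adj a b ↔ (a ∈ C ∧ b ∉ C ∧ p b = a) ∨ (b ∈ C ∧ a ∉ C ∧ p a = b)) →
    (∀ c ∈ C, ((s \ C).filter (fun l => p l = c)).card = m) →
    nkGrundy G s = nimRepl n (if (m + 1) % 2 = 0 then 1 else 2) := by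
  intro n
  induction n with
  | zero =>
    intro s C p m hm hC hCs hpar hadj hfib
    have hCe : C = ∅ := Finset.card_eq_zero.mp hC
    subst hCe
    have hse : s = ∅ := by
      rcases Finset.eq_empty_or_nonempty s with h | ⟨l, hl⟩
      · exact h
      · exact absurd (hpar l hl (Finset.notMem_empty l)) (Finset.notMem_empty _)
    subst hse
    rw [nkGrundy_empty, nimRepl_zero]
  | succ n ih =>
    intro s C p m hm hC hCs hpar hadj hfib
    obtain ⟨c, hc⟩ : C.Nonempty := Finset.card_pos.mp (by omega)
    set star : Finset V := insert c ((s \ C).filter (fun l => p l = c)) with hstar_def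
    have hfc : ∀ l, l ∈ (s \ C).filter (fun l => p l = c) ↔ l ∈ s ∧ l ∉ C ∧ p l = c := by
      intro l
      simp only [Finset.mem_filter, Finset.mem_sdiff, and_assoc]
    have hstar_mem : ∀ l, l ∈ star ↔ l = c ∨ (l ∈ s ∧ l ∉ C ∧ p l = c) := by
      intro l
      simp only [hstar_def, Finset.mem_insert, hfc]
    have hstar_sub : star ⊆ s := by
      intro l hl
      rcases (hstar_mem l).mp hl with rfl | ⟨h, _, _⟩
      · exact hCs hc
      · exact h
    have hcC : ∀ l ∈ star, l ≠ c → l ∉ C := by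
      intro l hl hlc
      rcases (hstar_mem l).mp hl with rfl | ⟨_, h, _⟩
      · exact absurd rfl hlc
      · exact h
    set rest : Finset V := s \ star with hrest_def
    have hsplit : star ∪ rest = s := Finset.union_sdiff_of_subset hstar_sub
    have hrest_mem : ∀ l, l ∈ rest ↔ l ∈ s ∧ l ≠ c ∧ ¬(l ∉ C ∧ p l = c) := by
      intro l
      simp only [hrest_def, Finset.mem_sdiff]
      constructor
      · rintro ⟨hls, h2⟩
        exact ⟨hls, fun h => h2 ((hstar_mem l).mpr (Or.inl h)),
          fun ⟨hnc, hp⟩ => h2 ((hstar_mem l).mpr (Or.inr ⟨hls, hnc, hp⟩))⟩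
      · rintro ⟨hls, hlc, h2⟩
        refine ⟨hls, fun h => ?_⟩
        rcases (hstar_mem l).mp h with h' | ⟨_, hnc, hp⟩
        · exact hlc h'
        · exact h2 ⟨hnc, hp⟩
    have hcnr : c ∉ rest := fun h => ((hrest_mem c).mp h).2.1 rfl
    have hrestC : ∀ l ∈ rest, l ∈ C ↔ l ∈ C.erase c := by
      intro l hl
      rw [Finset.mem_erase]
      exact ⟨fun h => ⟨((hrest_mem l).mp hl).2.1, h⟩, fun h => h.2⟩
    -- cross non-adjacency
    have hcross : ∀ a ∈ star, ∀ b ∈ rest, ¬ G.Adj a b := by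
      intro a ha b hb hAdj
      have hbs := ((hrest_mem b).mp hb).1
      rcases (hadj a (hstar_sub ha) b hbs).mp hAdj with ⟨haC, hbC, hpb⟩ | ⟨hbC, haC, hpa⟩
      · -- a ∈ C and a ∈ star: a = c
        have hac : a = c := by
          by_contra hne
          exact (hcC a ha hne) haC
        subst hac
        exact ((hrest_mem b).mp hb).2.2 ⟨hbC, hpb⟩
      · -- a ∈ star, a ∉ C → p a = c, but p a = b ∈ C
        have hane : a ≠ c := fun h => (h ▸ haC) hc
        rcases (hstar_mem a).mp ha with h | ⟨_, _, hpc⟩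
        · exact hane h
        · rw [hpa] at hpc
          exact hcnr (hpc ▸ hb)
    have hdisj : Disjoint star rest := Finset.disjoint_sdiff
    -- star Grundy
    have hstar_card : star.card = m + 1 := by
      rw [hstar_def, Finset.card_insert_of_notMem (fun h => ((hfc c).mp h).2.1 hc),
        hfib c hc]
    have h2c : 2 ≤ star.card := by omega
    have hstar_val : nkGrundy G star = if (m + 1) % 2 = 0 then 1 else 2 := by
      rw [← hstar_card]
      apply nkGrundy_star G (Finset.mem_insert_self c _) h2c
      · intro v hv hvc
        obtain ⟨hvs, hvC, hpv⟩ := ((hstar_mem v).mp hv).resolve_left hvc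
        exact (hadj c (hCs hc) v hvs).mpr (Or.inl ⟨hc, hvC, hpv⟩)
      · intro v hv w hw hvc hwc hAdj
        have hvC := hcC v hv hvc
        have hwC := hcC w hw hwc
        rcases (hadj v (hstar_sub hv) w (hstar_sub hw)).mp hAdj with ⟨h, _, _⟩ | ⟨h, _, _⟩
        · exact hvC h
        · exact hwC h
    -- rest Grundy by induction
    have hrest_val : nkGrundy G rest = nimRepl n (if (m + 1) % 2 = 0 then 1 else 2) := by
      apply ih rest (C.erase c) p m hm
      · rw [Finset.card_erase_of_mem hc, hC]; omega
      · intro x hx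
        rw [Finset.mem_erase] at hx
        rw [hrest_mem]
        exact ⟨hCs hx.2, hx.1, fun ⟨h, _⟩ => h hx.2⟩
      · intro l hl hlC
        have hls := ((hrest_mem l).mp hl).1
        have hlC' : l ∉ C := fun h => hlC ((hrestC l hl).mp h)
        have hpl := hpar l hls hlC'
        rw [Finset.mem_erase]
        refine ⟨fun h => ?_, hpl⟩
        exact ((hrest_mem l).mp hl).2.2 ⟨hlC', h⟩
      · intro a ha b hb
        rw [hadj a (((hrest_mem a).mp ha).1) b (((hrest_mem b).mp hb).1)]
        constructor
        · rintro (⟨h1, h2, h3⟩ | ⟨h1, h2, h3⟩)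
          · exact Or.inl ⟨(hrestC a ha).mp h1, fun h => h2 (Finset.mem_of_mem_erase h), h3⟩
          · exact Or.inr ⟨(hrestC b hb).mp h1, fun h => h2 (Finset.mem_of_mem_erase h), h3⟩
        · rintro (⟨h1, h2, h3⟩ | ⟨h1, h2, h3⟩)
          · refine Or.inl ⟨Finset.mem_of_mem_erase h1, fun h => ?_, h3⟩
            exact h2 ((hrestC b hb).mp h)
          · refine Or.inr ⟨Finset.mem_of_mem_erase h1, fun h => ?_, h3⟩
            exact h2 ((hrestC a ha).mp h)
      · intro c' hc'
        rw [Finset.mem_erase] at hc'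
        rw [← hfib c' hc'.2]
        congr 1
        ext l
        simp only [Finset.mem_filter, Finset.mem_sdiff]
        constructor
        · rintro ⟨⟨hl, hlC⟩, hpl⟩
          have hls := ((hrest_mem l).mp hl).1
          refine ⟨⟨hls, fun h => hlC ((hrestC l hl).mp h)⟩, hpl⟩
        · rintro ⟨⟨hls, hlC⟩, hpl⟩
          have hlc : l ≠ c := by
            rintro rfl
            exact hlC hc
          refine ⟨⟨(hrest_mem l).mpr ⟨hls, hlc, fun ⟨_, hp⟩ => hc'.1 (by rw [← hpl, hp])⟩,
            fun h => hlC (Finset.mem_of_mem_erase h)⟩, hpl⟩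
    calc nkGrundy G s = nkGrundy G (star ∪ rest) := by rw [hsplit]
      _ = nkGrundy G star ^^^ nkGrundy G rest := by
          apply nkGrundy_union G s.card _ _ (by rw [hsplit]) hcross hdisj
      _ = nimRepl (n + 1) (if (m + 1) % 2 = 0 then 1 else 2) := by
          rw [hstar_val, hrest_val, nimRepl_succ]

def treeval (n m : ℕ) : ℕ :=
  if n = 0 then 1 else if m % 2 = 0 then 1 else if n % 2 = 1 then 2 else 3

lemma tree_mex (n m : ℕ) (hm : 1 ≤ m) :
    mex {((n + 1) * m) % 2, nimRepl n (if (m + 1) % 2 = 0 then 1 else 2),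
      treeval n m ^^^ (m - 1) % 2} = treeval (n + 1) m := by
  rcases Nat.mod_two_eq_zero_or_one m with hm2 | hm2
  · -- m even
    have eg : (if (m + 1) % 2 = 0 then (1:ℕ) else 2) = 2 := if_neg (by omega)
    have e1 : ((n + 1) * m) % 2 = 0 := by rw [Nat.mul_mod, hm2]; omega
    have e2 : (m - 1) % 2 = 1 := by omega
    have e3 : treeval n m = 1 := by simp [treeval, hm2]
    have e4 : treeval (n + 1) m = 1 := by
      unfold treeval; rw [if_neg (by omega), if_pos hm2]
    rw [e1, e2, e3, e4, eg, nimRepl_eq]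
    rcases Nat.mod_two_eq_zero_or_one n with hn2 | hn2
    · rw [if_neg (by omega)]
      show mex {0, 0, 1 ^^^ 1} = 1
      exact mex_eq (by decide) (by intro k hk; interval_cases k <;> decide)
    · rw [if_pos hn2]
      show mex {0, 2, 1 ^^^ 1} = 1
      exact mex_eq (by decide) (by intro k hk; interval_cases k <;> decide)
  · -- m odd
    have eg : (if (m + 1) % 2 = 0 then (1:ℕ) else 2) = 1 := if_pos (by omega)
    have e2 : (m - 1) % 2 = 0 := by omega
    have e1 : ((n + 1) * m) % 2 = (n + 1) % 2 := by rw [Nat.mul_mod, hm2]; omega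
    rw [e2, e1, eg, nimRepl_eq, Nat.xor_zero]
    rcases Nat.eq_zero_or_pos n with rfl | hn
    · rw [if_neg (by omega)]
      have e3 : treeval 0 m = 1 := rfl
      have e4 : treeval 1 m = 2 := by unfold treeval; rw [if_neg (by omega), if_neg (by omega), if_pos (by omega)]
      rw [e3, e4, show (0 + 1) % 2 = 1 from rfl]
      exact mex_eq (by decide) (by intro k hk; interval_cases k <;> decide)
    · rcases Nat.mod_two_eq_zero_or_one n with hn2 | hn2
      · -- n even ≥ 2
        have e3 : treeval n m = 3 := by
          unfold treeval; rw [if_neg (by omega), if_neg (by omega), if_neg (by omega)]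
        have e4 : treeval (n + 1) m = 2 := by
          unfold treeval; rw [if_neg (by omega), if_neg (by omega), if_pos (by omega)]
        rw [e3, e4, if_neg (by omega), show (n + 1) % 2 = 1 by omega]
        exact mex_eq (by decide) (by intro k hk; interval_cases k <;> decide)
      · -- n odd
        have e3 : treeval n m = 2 := by
          unfold treeval; rw [if_neg (by omega), if_neg (by omega), if_pos hn2]
        have e4 : treeval (n + 1) m = 3 := by
          unfold treeval; rw [if_neg (by omega), if_neg (by omega), if_neg (by omega)]
        rw [e3, e4, if_pos hn2, show (n + 1) % 2 = 0 by omega]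
        exact mex_eq (by decide) (by intro k hk; interval_cases k <;> decide)

lemma nkGrundy_tree {V : Type*} [DecidableEq V] (G : SimpleGraph V) [DecidableRel G.Adj] :
    ∀ (n : ℕ) (s C : Finset V) (r : V) (p : V → V) (m : ℕ), 1 ≤ m →
    C.card = n → r ∈ s → C ⊆ s → r ∉ C →
    (∀ l ∈ s, l ≠ r → l ∉ C → p l ∈ C) →
    (∀ a ∈ s, ∀ b ∈ s, G.Adj a b ↔
      (a = r ∧ b ∈ C) ∨ (b = r ∧ a ∈ C) ∨
      (a ∈ C ∧ b ≠ r ∧ b ∉ C ∧ p b = a) ∨ (b ∈ C ∧ a ≠ r ∧ a ∉ C ∧ p a = b)) →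
    (∀ c ∈ C, (s.filter fun l => l ≠ r ∧ l ∉ C ∧ p l = c).card = m) →
    nkGrundy G s = treeval n m := by
  intro n
  induction n with
  | zero =>
    intro s C r p m hm hC hr hCs hrC hpar hadj hfib
    have hCe : C = ∅ := Finset.card_eq_zero.mp hC
    subst hCe
    have hs : s = {r} := by
      apply Finset.eq_singleton_iff_unique_mem.mpr
      refine ⟨hr, fun l hl => ?_⟩
      by_contra hlr
      exact absurd (hpar l hl hlr (Finset.notMem_empty l)) (Finset.notMem_empty _)
    subst hs
    rw [nkGrundy_edgeless G 1 _ (by simp) ?_, Finset.card_singleton]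
    · rfl
    · intro a ha b hb hAdj
      rcases (hadj a ha b hb).mp hAdj with ⟨_, h⟩ | ⟨_, h⟩ | ⟨h, _⟩ | ⟨h, _⟩ <;>
        exact absurd h (Finset.notMem_empty _)
  | succ n ih =>
    intro s C r p m hm hC hr hCs hrC hpar hadj hfib
    obtain ⟨c₀, hc₀⟩ : C.Nonempty := Finset.card_pos.mp (by omega)
    obtain ⟨l₀', hl₀'⟩ : (s.filter fun l => l ≠ r ∧ l ∉ C ∧ p l = c₀).Nonempty := by
      rw [← Finset.card_pos, hfib c₀ hc₀]; omega
    rw [Finset.mem_filter] at hl₀'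
    -- move at the root
    have hroot : nkGrundy G (nkMove G s r) = ((n + 1) * m) % 2 := by
      have hmr : nkMove G s r = s.filter (fun l => l ≠ r ∧ l ∉ C) := by
        ext w
        simp only [nkMove, Finset.mem_filter, Finset.mem_erase]
        constructor
        · rintro ⟨⟨hwr, hws⟩, hnadj⟩
          exact ⟨hws, hwr, fun hwC => hnadj ((hadj r hr w hws).mpr (Or.inl ⟨rfl, hwC⟩))⟩
        · rintro ⟨hws, hwr, hwC⟩
          refine ⟨⟨hwr, hws⟩, fun hAdj => ?_⟩
          rcases (hadj r hr w hws).mp hAdj with ⟨_, h⟩ | ⟨h, _⟩ | ⟨h, _⟩ | ⟨_, h, _, _⟩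
          · exact hwC h
          · exact hwr h
          · exact hrC h
          · exact h rfl
      have hLbi : s.filter (fun l => l ≠ r ∧ l ∉ C)
          = C.biUnion (fun c => s.filter fun l => l ≠ r ∧ l ∉ C ∧ p l = c) := by
        ext l
        simp only [Finset.mem_biUnion, Finset.mem_filter]
        constructor
        · rintro ⟨hls, hlr, hlC⟩
          exact ⟨p l, hpar l hls hlr hlC, hls, hlr, hlC, rfl⟩
        · rintro ⟨c, _, hls, hlr, hlC, _⟩
          exact ⟨hls, hlr, hlC⟩
      have hLcard : (s.filter (fun l => l ≠ r ∧ l ∉ C)).card = (n + 1) * m := by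
        rw [hLbi, Finset.card_biUnion, ← hC]
        · rw [Finset.sum_congr rfl (fun c hc => hfib c hc), Finset.sum_const, smul_eq_mul]
        · intro x hx y hy hxy
          rw [Function.onFun, Finset.disjoint_left]
          rintro a ha ha'
          rw [Finset.mem_filter] at ha ha'
          exact hxy (ha.2.2.2 ▸ ha'.2.2.2)
      rw [hmr, nkGrundy_edgeless G _ _ le_rfl ?_, hLcard]
      intro a ha b hb hAdj
      rw [Finset.mem_filter] at ha hb
      rcases (hadj a ha.1 b hb.1).mp hAdj with ⟨h, _⟩ | ⟨h, _⟩ | ⟨h, _⟩ | ⟨h, _⟩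
      · exact ha.2.1 h
      · exact hb.2.1 h
      · exact ha.2.2 h
      · exact hb.2.2 h
    -- move at a child
    have hchild : ∀ c ∈ C, nkGrundy G (nkMove G s c)
        = nimRepl n (if (m + 1) % 2 = 0 then 1 else 2) := by
      intro c hc
      have hcr : c ≠ r := fun h => hrC (h ▸ hc)
      have hmc : nkMove G s c = s.filter (fun l => l ≠ r ∧ l ≠ c ∧ ¬(l ∉ C ∧ p l = c)) := by
        ext w
        simp only [nkMove, Finset.mem_filter, Finset.mem_erase]
        constructor
        · rintro ⟨⟨hwc, hws⟩, hnadj⟩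
          have hwr : w ≠ r := by
            intro hweq
            apply hnadj
            rw [hweq]
            exact (hadj c (hCs hc) r hr).mpr (Or.inr (Or.inl ⟨rfl, hc⟩))
          refine ⟨hws, hwr, hwc, fun ⟨hwC, hpw⟩ => ?_⟩
          exact hnadj ((hadj c (hCs hc) w hws).mpr (Or.inr (Or.inr (Or.inl ⟨hc, hwr, hwC, hpw⟩))))
        · rintro ⟨hws, hwr, hwc, hwn⟩
          refine ⟨⟨hwc, hws⟩, fun hAdj => ?_⟩
          rcases (hadj c (hCs hc) w hws).mp hAdj with ⟨h, _⟩ | ⟨h, _⟩ | ⟨_, _, hwC, hpw⟩ |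
            ⟨_, _, hcC, _⟩
          · exact hcr h
          · exact hwr h
          · exact hwn ⟨hwC, hpw⟩
          · exact hcC hc
      rw [hmc]
      apply nkGrundy_starForest G n _ (C.erase c) p m hm
        (by rw [Finset.card_erase_of_mem hc, hC]; omega)
      · intro x hx
        rw [Finset.mem_erase] at hx
        rw [Finset.mem_filter]
        exact ⟨hCs hx.2, fun h => hrC (h ▸ hx.2), hx.1, fun ⟨h, _⟩ => h hx.2⟩
      · intro l hl hlCe
        rw [Finset.mem_filter] at hl
        have hlC : l ∉ C := fun h => hlCe (Finset.mem_erase.mpr ⟨hl.2.2.1, h⟩)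
        refine Finset.mem_erase.mpr ⟨fun h => hl.2.2.2 ⟨hlC, h⟩, hpar l hl.1 hl.2.1 hlC⟩
      · intro a ha b hb
        rw [Finset.mem_filter] at ha hb
        rw [hadj a ha.1 b hb.1]
        constructor
        · rintro (⟨h, _⟩ | ⟨h, _⟩ | ⟨haC, _, hbC, hpb⟩ | ⟨hbC, _, haC, hpa⟩)
          · exact absurd h ha.2.1
          · exact absurd h hb.2.1
          · exact Or.inl ⟨Finset.mem_erase.mpr ⟨ha.2.2.1, haC⟩,
              fun h => hbC (Finset.mem_of_mem_erase h), hpb⟩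
          · exact Or.inr ⟨Finset.mem_erase.mpr ⟨hb.2.2.1, hbC⟩,
              fun h => haC (Finset.mem_of_mem_erase h), hpa⟩
        · rintro (⟨haCe, hbCe, hpb⟩ | ⟨hbCe, haCe, hpa⟩)
          · have hbC : b ∉ C := fun h => hbCe (Finset.mem_erase.mpr ⟨hb.2.2.1, h⟩)
            exact Or.inr (Or.inr (Or.inl ⟨Finset.mem_of_mem_erase haCe, hb.2.1, hbC, hpb⟩))
          · have haC : a ∉ C := fun h => haCe (Finset.mem_erase.mpr ⟨ha.2.2.1, h⟩)
            exact Or.inr (Or.inr (Or.inr ⟨Finset.mem_of_mem_erase hbCe, ha.2.1, haC, hpa⟩))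
      · intro c' hc'
        rw [Finset.mem_erase] at hc'
        rw [← hfib c' hc'.2]
        congr 1
        ext l
        simp only [Finset.mem_filter, Finset.mem_sdiff, Finset.mem_erase]
        constructor
        · rintro ⟨⟨⟨hls, hlr, hlc, hln⟩, hlCe⟩, hpl⟩
          have hlC : l ∉ C := fun h => hlCe ⟨hlc, h⟩
          exact ⟨hls, hlr, hlC, hpl⟩
        · rintro ⟨hls, hlr, hlC, hpl⟩
          have hlc : l ≠ c := fun h => hlC (h ▸ hc)
          exact ⟨⟨⟨hls, hlr, hlc, fun ⟨_, hp⟩ => hc'.1 (by rw [← hpl, hp])⟩,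
            fun h => hlC h.2⟩, hpl⟩
    -- move at a leaf
    have hleaf : ∀ l₀ ∈ s, l₀ ≠ r → l₀ ∉ C →
        nkGrundy G (nkMove G s l₀) = treeval n m ^^^ (m - 1) % 2 := by
      intro l₀ hl₀s hl₀r hl₀C
      set c := p l₀ with hcdef
      have hc : c ∈ C := hpar l₀ hl₀s hl₀r hl₀C
      have hcr : c ≠ r := fun h => hrC (h ▸ hc)
      have hml : nkMove G s l₀ = s.filter (fun w => w ≠ l₀ ∧ w ≠ c) := by
        ext w
        simp only [nkMove, Finset.mem_filter, Finset.mem_erase]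
        constructor
        · rintro ⟨⟨hwl, hws⟩, hnadj⟩
          refine ⟨hws, hwl, fun hwc => ?_⟩
          exact hnadj ((hadj l₀ hl₀s w hws).mpr
            (Or.inr (Or.inr (Or.inr ⟨hwc ▸ hc, hl₀r, hl₀C, hwc.symm⟩))))
        · rintro ⟨hws, hwl, hwc⟩
          refine ⟨⟨hwl, hws⟩, fun hAdj => ?_⟩
          rcases (hadj l₀ hl₀s w hws).mp hAdj with ⟨h, _⟩ | ⟨_, h⟩ | ⟨h, _⟩ | ⟨_, _, _, h⟩
          · exact hl₀r h
          · exact hl₀C h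
          · exact hl₀C h
          · exact hwc h.symm
      set tp : Finset V := s.filter (fun w => w ≠ l₀ ∧ w ≠ c ∧ ¬(w ≠ r ∧ w ∉ C ∧ p w = c))
        with htp_def
      set orph : Finset V := (s.filter fun w => w ≠ r ∧ w ∉ C ∧ p w = c).erase l₀
        with horph_def
      have htp_mem : ∀ w, w ∈ tp ↔ w ∈ s ∧ w ≠ l₀ ∧ w ≠ c ∧ ¬(w ≠ r ∧ w ∉ C ∧ p w = c) := by
        intro w; simp only [htp_def, Finset.mem_filter]
      have horph_mem : ∀ w, w ∈ orph ↔ w ≠ l₀ ∧ w ∈ s ∧ w ≠ r ∧ w ∉ C ∧ p w = c := by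
        intro w; simp only [horph_def, Finset.mem_erase, Finset.mem_filter, and_assoc]
      have hsplit : nkMove G s l₀ = tp ∪ orph := by
        rw [hml]
        ext w
        simp only [Finset.mem_filter, Finset.mem_union, htp_mem, horph_mem]
        constructor
        · rintro ⟨hws, hwl, hwc⟩
          by_cases hw : w ≠ r ∧ w ∉ C ∧ p w = c
          · exact Or.inr ⟨hwl, hws, hw⟩
          · exact Or.inl ⟨hws, hwl, hwc, hw⟩
        · rintro (⟨hws, hwl, hwc, _⟩ | ⟨hwl, hws, _, hwC, _⟩)
          · exact ⟨hws, hwl, hwc⟩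
          · exact ⟨hws, hwl, fun h => hwC (h ▸ hc)⟩
      have hdisj : Disjoint tp orph := by
        rw [Finset.disjoint_left]
        intro a ha ha'
        exact ((htp_mem a).mp ha).2.2.2 (((horph_mem a).mp ha').2.2)
      have hcross : ∀ a ∈ tp, ∀ b ∈ orph, ¬ G.Adj a b := by
        intro a ha b hb hAdj
        obtain ⟨has, _, hac, _⟩ := (htp_mem a).mp ha
        obtain ⟨_, hbs, hbr, hbC, hpb⟩ := (horph_mem b).mp hb
        rcases (hadj a has b hbs).mp hAdj with ⟨_, h⟩ | ⟨h, _⟩ | ⟨haC, _, _, hpb'⟩ |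
          ⟨h, _, _, _⟩
        · exact hbC h
        · exact hbr h
        · exact hac (hpb ▸ hpb'.symm ▸ rfl)
        · exact hbC h
      have horph_card : orph.card = m - 1 := by
        rw [horph_def, Finset.card_erase_of_mem, hfib c hc]
        rw [Finset.mem_filter]
        exact ⟨hl₀s, hl₀r, hl₀C, rfl⟩
      have horph_val : nkGrundy G orph = (m - 1) % 2 := by
        rw [← horph_card]
        apply nkGrundy_edgeless G orph.card _ le_rfl
        intro a ha b hb hAdj
        obtain ⟨_, has, har, haC, _⟩ := (horph_mem a).mp ha
        obtain ⟨_, hbs, hbr, hbC, _⟩ := (horph_mem b).mp hb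
        rcases (hadj a has b hbs).mp hAdj with ⟨h, _⟩ | ⟨h, _⟩ | ⟨h, _⟩ | ⟨h, _⟩
        · exact har h
        · exact hbr h
        · exact haC h
        · exact hbC h
      have htp_val : nkGrundy G tp = treeval n m := by
        apply ih tp (C.erase c) r p m hm
          (by rw [Finset.card_erase_of_mem hc, hC]; omega)
        · exact (htp_mem r).mpr ⟨hr, fun h => hl₀r h.symm, fun h => hrC (h ▸ hc),
            fun ⟨h, _⟩ => h rfl⟩
        · intro x hx
          rw [Finset.mem_erase] at hx
          exact (htp_mem x).mpr ⟨hCs hx.2, fun h => hl₀C (h ▸ hx.2), hx.1,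
            fun ⟨_, h, _⟩ => h hx.2⟩
        · exact fun h => hrC (Finset.mem_of_mem_erase h)
        · intro l hl hlr hlCe
          obtain ⟨hls, _, hlc, hln⟩ := (htp_mem l).mp hl
          have hlC : l ∉ C := fun h => hlCe (Finset.mem_erase.mpr ⟨hlc, h⟩)
          refine Finset.mem_erase.mpr ⟨fun h => hln ⟨hlr, hlC, h⟩, hpar l hls hlr hlC⟩
        · intro a ha b hb
          obtain ⟨has, _, hac, han⟩ := (htp_mem a).mp ha
          obtain ⟨hbs, _, hbc, hbn⟩ := (htp_mem b).mp hb
          rw [hadj a has b hbs]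
          constructor
          · rintro (⟨h1, h2⟩ | ⟨h1, h2⟩ | ⟨haC, hbr, hbC, hpb⟩ | ⟨hbC, har, haC, hpa⟩)
            · exact Or.inl ⟨h1, Finset.mem_erase.mpr ⟨hbc, h2⟩⟩
            · exact Or.inr (Or.inl ⟨h1, Finset.mem_erase.mpr ⟨hac, h2⟩⟩)
            · exact Or.inr (Or.inr (Or.inl ⟨Finset.mem_erase.mpr ⟨hac, haC⟩, hbr,
                fun h => hbC (Finset.mem_of_mem_erase h), hpb⟩))
            · exact Or.inr (Or.inr (Or.inr ⟨Finset.mem_erase.mpr ⟨hbc, hbC⟩, har,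
                fun h => haC (Finset.mem_of_mem_erase h), hpa⟩))
          · rintro (⟨h1, h2⟩ | ⟨h1, h2⟩ | ⟨haCe, hbr, hbCe, hpb⟩ | ⟨hbCe, har, haCe, hpa⟩)
            · exact Or.inl ⟨h1, Finset.mem_of_mem_erase h2⟩
            · exact Or.inr (Or.inl ⟨h1, Finset.mem_of_mem_erase h2⟩)
            · have hbC : b ∉ C := fun h => hbCe (Finset.mem_erase.mpr ⟨hbc, h⟩)
              exact Or.inr (Or.inr (Or.inl ⟨Finset.mem_of_mem_erase haCe, hbr, hbC, hpb⟩))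
            · have haC : a ∉ C := fun h => haCe (Finset.mem_erase.mpr ⟨hac, h⟩)
              exact Or.inr (Or.inr (Or.inr ⟨Finset.mem_of_mem_erase hbCe, har, haC, hpa⟩))
        · intro c' hc'
          rw [Finset.mem_erase] at hc'
          rw [← hfib c' hc'.2]
          congr 1
          ext l
          simp only [Finset.mem_filter, htp_mem, Finset.mem_erase]
          constructor
          · rintro ⟨⟨hls, _, hlc, _⟩, hlr, hlCe, hpl⟩
            have hlC : l ∉ C := fun h => hlCe ⟨hlc, h⟩
            exact ⟨hls, hlr, hlC, hpl⟩
          · rintro ⟨hls, hlr, hlC, hpl⟩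
            have hlc : l ≠ c := fun h => hlC (h ▸ hc)
            have hll : l ≠ l₀ := fun h => hc'.1 (by rw [← hpl, h])
            exact ⟨⟨hls, hll, hlc, fun ⟨_, _, hp⟩ => hc'.1 (by rw [← hpl, hp])⟩,
              hlr, fun h => hlC h.2, hpl⟩
      rw [hsplit, nkGrundy_union G (tp ∪ orph).card _ _ le_rfl hcross hdisj,
        htp_val, horph_val]
    -- assemble
    rw [nkGrundy_eq', ← tree_mex n m hm]
    congr 1
    ext x
    simp only [Finset.mem_image, Finset.mem_insert, Finset.mem_singleton]
    constructor
    · rintro ⟨v, hv, heq⟩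
      by_cases hvr : v = r
      · subst hvr; exact Or.inl (by rw [← heq, hroot])
      · by_cases hvC : v ∈ C
        · exact Or.inr (Or.inl (by rw [← heq, hchild v hvC]))
        · exact Or.inr (Or.inr (by rw [← heq, hleaf v hv hvr hvC]))
    · rintro (hx | hx | hx)
      · exact ⟨r, hr, by rw [hroot, hx]⟩
      · exact ⟨c₀, hCs hc₀, by rw [hchild c₀ hc₀, hx]⟩
      · exact ⟨l₀', hl₀'.1, by rw [hleaf l₀' hl₀'.1 hl₀'.2.1 hl₀'.2.2.1, hx]⟩

lemma star_val (m : ℕ) (hm : 1 ≤ m) :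
    nkGrundy (starGraph m) (Finset.range (m + 1)) = if (m + 1) % 2 = 0 then 1 else 2 := by
  have hcard : (Finset.range (m + 1)).card = m + 1 := Finset.card_range _
  rw [show (if (m + 1) % 2 = 0 then (1:ℕ) else 2)
      = (if (Finset.range (m + 1)).card % 2 = 0 then 1 else 2) from by rw [hcard]]
  apply nkGrundy_star (starGraph m) (r := 0) (Finset.mem_range.mpr (by omega))
    (by rw [hcard]; omega)
  · intro v hv hv0
    rw [Finset.mem_range] at hv
    show (SimpleGraph.fromRel _).Adj 0 v
    rw [SimpleGraph.fromRel_adj]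
    exact ⟨Ne.symm hv0, Or.inl ⟨rfl, by omega, by omega⟩⟩
  · intro v hv w hw hv0 hw0 hAdj
    rw [show starGraph m = SimpleGraph.fromRel
      (fun a b => a = 0 ∧ 1 ≤ b ∧ b ≤ m) from rfl, SimpleGraph.fromRel_adj] at hAdj
    rcases hAdj with ⟨_, ⟨h, _⟩ | ⟨h, _⟩⟩
    · exact hv0 h
    · exact hw0 h

lemma tree2_val (n m : ℕ) (hm : 1 ≤ m) :
    nkGrundy (tree2 n m) (Finset.range (n + n * m + 1)) = treeval n m := by
  have key : ∀ a b : ℕ, 1 ≤ a → a ≤ n → b ≤ n + n * m →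
      ((n + (a - 1) * m + 1 ≤ b ∧ b ≤ n + a * m)
        ↔ (b ≠ 0 ∧ b ∉ Finset.Icc 1 n ∧ (b - n - 1) / m + 1 = a)) := by
    intro a b ha1 han hbn
    have e : (a - 1 + 1) * m = a * m := by rw [(by omega : a - 1 + 1 = a)]
    constructor
    · rintro ⟨h1, h2⟩
      have hb1 : n + 1 ≤ b := by omega
      have hdiv : (b - n - 1) / m = a - 1 := by
        apply Nat.div_eq_of_lt_le
        · omega
        · rw [e]; omega
      refine ⟨by omega, ?_, by omega⟩
      rw [Finset.mem_Icc]
      omega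
    · rintro ⟨hb0, hbI, hpa⟩
      rw [Finset.mem_Icc] at hbI
      push_neg at hbI
      have hbn1 : n + 1 ≤ b := by
        rcases Nat.eq_zero_or_pos b with rfl | hb
        · exact absurd rfl hb0
        · exact hbI (by omega)
      have hdiv : (b - n - 1) / m = a - 1 := by omega
      have h1 : (a - 1) * m ≤ b - n - 1 := by
        rw [← hdiv]; exact Nat.div_mul_le_self _ _
      have h2 : b - n - 1 < (a - 1 + 1) * m :=
        (Nat.div_lt_iff_lt_mul (by omega : 0 < m)).mp (by omega)
      rw [e] at h2
      constructor <;> omega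
  apply nkGrundy_tree (tree2 n m) n _ (Finset.Icc 1 n) 0 (fun l => (l - n - 1) / m + 1) m hm
  · simp
  · exact Finset.mem_range.mpr (by omega)
  · intro c hc
    rw [Finset.mem_Icc] at hc
    exact Finset.mem_range.mpr (by omega)
  · simp
  · intro l hl hl0 hlI
    rw [Finset.mem_range] at hl
    rw [Finset.mem_Icc] at hlI ⊢
    push_neg at hlI
    have hbn1 : n + 1 ≤ l := hlI (by omega)
    have hd := (Nat.div_lt_iff_lt_mul (by omega : 0 < m)).mpr
      (show l - n - 1 < n * m by omega)
    exact ⟨Nat.succ_le_succ (Nat.zero_le _), hd⟩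
  · intro a ha b hb
    rw [Finset.mem_range] at ha hb
    rw [show tree2 n m = SimpleGraph.fromRel (fun a b =>
        (a = 0 ∧ 1 ≤ b ∧ b ≤ n) ∨
        (1 ≤ a ∧ a ≤ n ∧ n + (a - 1) * m + 1 ≤ b ∧ b ≤ n + a * m)) from rfl,
      SimpleGraph.fromRel_adj]
    constructor
    · rintro ⟨hab, (⟨h0, h1, h2⟩ | ⟨h1, h2, h3, h4⟩) | (⟨h0, h1, h2⟩ | ⟨h1, h2, h3, h4⟩)⟩
      · exact Or.inl ⟨h0, Finset.mem_Icc.mpr ⟨h1, h2⟩⟩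
      · obtain ⟨k1, k2, k3⟩ := (key a b h1 h2 (by omega)).mp ⟨h3, h4⟩
        exact Or.inr (Or.inr (Or.inl ⟨Finset.mem_Icc.mpr ⟨h1, h2⟩, k1, k2, k3⟩))
      · exact Or.inr (Or.inl ⟨h0, Finset.mem_Icc.mpr ⟨h1, h2⟩⟩)
      · obtain ⟨k1, k2, k3⟩ := (key b a h1 h2 (by omega)).mp ⟨h3, h4⟩
        exact Or.inr (Or.inr (Or.inr ⟨Finset.mem_Icc.mpr ⟨h1, h2⟩, k1, k2, k3⟩))
    · rintro (⟨h0, hI⟩ | ⟨h0, hI⟩ | ⟨hI, hb0, hbI, hp⟩ | ⟨hI, ha0, haI, hp⟩)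
      · rw [Finset.mem_Icc] at hI
        exact ⟨by omega, Or.inl (Or.inl ⟨h0, hI.1, hI.2⟩)⟩
      · rw [Finset.mem_Icc] at hI
        exact ⟨by omega, Or.inr (Or.inl ⟨h0, hI.1, hI.2⟩)⟩
      · rw [Finset.mem_Icc] at hI
        obtain ⟨h3, h4⟩ := (key a b hI.1 hI.2 (by omega)).mpr ⟨hb0, hbI, hp⟩
        exact ⟨by omega, Or.inl (Or.inr ⟨hI.1, hI.2, h3, h4⟩)⟩
      · rw [Finset.mem_Icc] at hI
        obtain ⟨h3, h4⟩ := (key b a hI.1 hI.2 (by omega)).mpr ⟨ha0, haI, hp⟩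
        exact ⟨by omega, Or.inr (Or.inr ⟨hI.1, hI.2, h3, h4⟩)⟩
  · intro c hc
    rw [Finset.mem_Icc] at hc
    have hflt : (Finset.range (n + n * m + 1)).filter
        (fun l => l ≠ 0 ∧ l ∉ Finset.Icc 1 n ∧ (l - n - 1) / m + 1 = c)
        = Finset.Icc (n + (c - 1) * m + 1) (n + c * m) := by
      ext l
      rw [Finset.mem_filter, Finset.mem_range]
      constructor
      · rintro ⟨hl, h⟩
        rw [Finset.mem_Icc]
        exact (key c l hc.1 hc.2 (by omega)).mpr h
      · intro h
        rw [Finset.mem_Icc] at h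
        have hcm : c * m ≤ n * m := Nat.mul_le_mul_right m hc.2
        exact ⟨by omega, (key c l hc.1 hc.2 (by omega)).mp h⟩
    rw [hflt, Nat.card_Icc]
    have e : (c - 1) * m + m = c * m := by
      rw [show c * m = (c - 1 + 1) * m from by rw [(by omega : c - 1 + 1 = c)], Nat.succ_mul]
    omega

theorem nkGrundy_tree2 (n m : ℕ) (hn : 1 ≤ n) (hm : 1 ≤ m) :
    nkGrundy (tree2 n m) (Finset.range (n + n * m + 1)) =
      mex {nimRepl (n * m) 1,
           nimRepl (n - 1) (nkGrundy (starGraph m) (Finset.range (m + 1))),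
           nkGrundy (tree2 (n - 1) m) (Finset.range ((n - 1) + (n - 1) * m + 1))
             ^^^ nimRepl (m - 1) 1} ∧
    nkGrundy (tree2 n m) (Finset.range (n + n * m + 1)) =
      if Even m then 1 else if Odd n then 2 else 3 := by
  obtain ⟨k, rfl⟩ : ∃ k, n = k + 1 := ⟨n - 1, by omega⟩
  have hstar := star_val m hm
  have htree := tree2_val (k + 1) m hm
  have htree' := tree2_val k m hm
  constructor
  · rw [htree, ← tree_mex k m hm]
    have e1 : nimRepl ((k + 1) * m) 1 = ((k + 1) * m) % 2 := by
      rw [nimRepl_eq]; split <;> omega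
    have e2 : nimRepl (m - 1) 1 = (m - 1) % 2 := by
      rw [nimRepl_eq]; split <;> omega
    simp only [Nat.add_sub_cancel]
    rw [e1, e2, hstar, htree']
  · rw [htree]
    unfold treeval
    rw [if_neg (by omega)]
    rcases Nat.mod_two_eq_zero_or_one m with h | h
    · rw [if_pos h, if_pos (Nat.even_iff.mpr h)]
    · rw [if_neg (show ¬ m % 2 = 0 by omega),
          if_neg (show ¬ Even m by rw [Nat.even_iff]; omega)]
      rcases Nat.mod_two_eq_zero_or_one (k + 1) with h2 | h2
      · rw [if_neg (show ¬ (k + 1) % 2 = 1 by omega),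
          if_neg (show ¬ Odd (k + 1) by rw [Nat.odd_iff]; omega)]
      · rw [if_pos h2, if_pos (Nat.odd_iff.mpr h2)]
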